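/- Define W as the κ-indexed cumulative hierarchy of partial functions from previous stages to A, with α ∈_W β := ⟆∃_{t∈dom(β)}(β(t) × (t =_W α)) and α =_W β := (α ⊆_W β) × (β ⊆_W α) where α ⊆_W β := ⋀_{t∈dom(α)}(α(t) → t ∈_W β). Then there exists ρ ∈ Σ such that ρ ≤ ⋀_{α∈W}(α =_W α) (equality is realized-reflexive). -/

import Mathlib

universe u v

/-- An implicative algebra: a complete lattice with an implication antitone in the
first argument, monotone in the second, distributing over arbitrary meets in the
second argument, together with a separator `Sep` which is upward closed, closed
under modus ponens, and contains the combinators K and S. -/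
structure ImplicativeAlgebra (A : Type u) [CompleteLattice A] where
  imp : A → A → A
  imp_anti : ∀ ⦃a a' b : A⦄, a ≤ a' → imp a' b ≤ imp a b
  imp_mono : ∀ ⦃a b b' : A⦄, b ≤ b' → imp a b ≤ imp a b'
  imp_sInf : ∀ (a : A) (S : Set A), imp a (sInf S) = ⨅ b ∈ S, imp a b
  Sep : Set A
  sep_upward : ∀ ⦃a b : A⦄, a ∈ Sep → a ≤ b → b ∈ Sep
  sep_mp : ∀ ⦃a b : A⦄, imp a b ∈ Sep → a ∈ Sep → b ∈ Sep
  sep_K : (⨅ a : A, ⨅ b : A, imp a (imp b a)) ∈ Sep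
  sep_S : (⨅ a : A, ⨅ b : A, ⨅ c : A,
      imp (imp a (imp b c)) (imp (imp a b) (imp a c))) ∈ Sep

namespace ImplicativeAlgebra

variable {A : Type u} [CompleteLattice A] (𝔸 : ImplicativeAlgebra A)

/-- Application: `a · b := ⋀ {x | a ≤ b → x}`. -/
def app (a b : A) : A := sInf {x : A | a ≤ 𝔸.imp b x}

/-- Implicative conjunction `a × b`. -/
def itimes (a b : A) : A := ⨅ x : A, 𝔸.imp (𝔸.imp a (𝔸.imp b x)) x

/-- Implicative disjunction `a + b`. -/
def iplus (a b : A) : A := ⨅ x : A, 𝔸.imp (𝔸.imp a x) (𝔸.imp (𝔸.imp b x) x)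

/-- Second-order encoding of the existential quantifier. -/
def iexists {ι : Sort v} (f : ι → A) : A := ⨅ x : A, 𝔸.imp (⨅ i, 𝔸.imp (f i) x) x

/-- Encoding of k = λx.λy.x. -/
def kComb : A := ⨅ a : A, 𝔸.imp a (⨅ b : A, 𝔸.imp b a)

/-- Encoding of λx.λy.y. -/
def kbarComb : A := ⨅ a : A, 𝔸.imp a (⨅ b : A, 𝔸.imp b b)

/-- Encoding of the pairing combinator p = λx.λy.λz.zxy. -/
def pComb : A := ⨅ a : A, 𝔸.imp a (⨅ b : A, 𝔸.imp b (⨅ c : A, 𝔸.imp c (𝔸.app (𝔸.app c a) b)))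

/-- Encoding of the first projection p₁ = λu.u k. -/
def p1Comb : A := ⨅ u : A, 𝔸.imp u (𝔸.app u 𝔸.kComb)

/-- Encoding of the second projection p₂ = λv.v k̄. -/
def p2Comb : A := ⨅ u : A, 𝔸.imp u (𝔸.app u 𝔸.kbarComb)

/-- Encoding of the existential-introduction combinator e = λx.λz.zx. -/
def eComb : A := ⨅ a : A, 𝔸.imp a (⨅ c : A, 𝔸.imp c (𝔸.app c a))

end ImplicativeAlgebra

/-- Names of the implicative model of set theory: a name is a (set-indexed)
family of previously constructed names, each labelled by a truth value in `A`
(a partial function from names to `A`, presented as a family). -/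
inductive Name (A : Type u) : Type (u + 1)
  | mk (ι : Type u) (elem : ι → Name A) (val : ι → A) : Name A

namespace Name

/-- The (index set of the) domain of a name. -/
def idx {A : Type u} : Name A → Type u
  | .mk ι _ _ => ι

/-- The elements of the domain of a name. -/
def elem {A : Type u} : (α : Name A) → α.idx → Name A
  | .mk _ e _ => e

/-- The truth value attached to each element of the domain of a name. -/
def val {A : Type u} : (α : Name A) → α.idx → A
  | .mk _ _ v => v

variable {A : Type u} [CompleteLattice A]

/-- `eqPair 𝔸 α β = (α ⊆_W β, β ⊆_W α)`, defined by simultaneous recursion,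
where `α ⊆_W β := ⋀_{t ∈ dom α}(α(t) → t ∈_W β)` and
`t ∈_W β := ∃_{u ∈ dom β}(β(u) × (u =_W t))` and `u =_W t := (u ⊆_W t) × (t ⊆_W u)`. -/
def eqPair (𝔸 : ImplicativeAlgebra A) : Name A → Name A → A × A
  | .mk _ e v, .mk _ e' v' =>
    (⨅ i, 𝔸.imp (v i) (𝔸.iexists fun j => 𝔸.itimes (v' j)
        (𝔸.itimes (eqPair 𝔸 (e i) (e' j)).2 (eqPair 𝔸 (e i) (e' j)).1)),
     ⨅ j, 𝔸.imp (v' j) (𝔸.iexists fun i => 𝔸.itimes (v i)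
        (𝔸.itimes (eqPair 𝔸 (e i) (e' j)).1 (eqPair 𝔸 (e i) (e' j)).2)))

/-- `α ⊆_W β`. -/
def subW (𝔸 : ImplicativeAlgebra A) (α β : Name A) : A := (eqPair 𝔸 α β).1

/-- `α =_W β := (α ⊆_W β) × (β ⊆_W α)`. -/
def eqW (𝔸 : ImplicativeAlgebra A) (α β : Name A) : A :=
  𝔸.itimes (eqPair 𝔸 α β).1 (eqPair 𝔸 α β).2

/-- `α ∈_W β := ∃_{t ∈ dom β}(β(t) × (t =_W α))`. -/
def memW (𝔸 : ImplicativeAlgebra A) (α β : Name A) : A :=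
  𝔸.iexists fun j : β.idx => 𝔸.itimes (β.val j) (eqW 𝔸 (β.elem j) α)

end Name

section Aux

namespace ImplicativeAlgebra

variable {A : Type u} [CompleteLattice A] (𝔸 : ImplicativeAlgebra A)

lemma le_imp_app (a b : A) : a ≤ 𝔸.imp b (𝔸.app a b) := by
  rw [app, 𝔸.imp_sInf]
  exact le_iInf fun x => le_iInf fun hx => hx

lemma app_le {a b c : A} (h : a ≤ 𝔸.imp b c) : 𝔸.app a b ≤ c := sInf_le h

lemma app_mono {a a' b b' : A} (ha : a ≤ a') (hb : b ≤ b') :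
    𝔸.app a b ≤ 𝔸.app a' b' :=
  𝔸.app_le <| ha.trans <| (𝔸.le_imp_app a' b').trans (𝔸.imp_anti hb)

lemma app_mem_sep {a b : A} (ha : a ∈ 𝔸.Sep) (hb : b ∈ 𝔸.Sep) :
    𝔸.app a b ∈ 𝔸.Sep :=
  𝔸.sep_mp (𝔸.sep_upward ha (𝔸.le_imp_app a b)) hb

/-- The K combinator as an element. -/
def kA : A := ⨅ a : A, ⨅ b : A, 𝔸.imp a (𝔸.imp b a)

/-- The S combinator as an element. -/
def sA : A := ⨅ a : A, ⨅ b : A, ⨅ c : A,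
    𝔸.imp (𝔸.imp a (𝔸.imp b c)) (𝔸.imp (𝔸.imp a b) (𝔸.imp a c))

lemma kA_sep : 𝔸.kA ∈ 𝔸.Sep := 𝔸.sep_K
lemma sA_sep : 𝔸.sA ∈ 𝔸.Sep := 𝔸.sep_S

lemma kA_le (a b : A) : 𝔸.kA ≤ 𝔸.imp a (𝔸.imp b a) :=
  (iInf_le _ a).trans (iInf_le _ b)

lemma kA_red (a b : A) : 𝔸.app (𝔸.app 𝔸.kA a) b ≤ a :=
  𝔸.app_le (𝔸.app_le (𝔸.kA_le a b))

lemma sA_red (f g x : A) :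
    𝔸.app (𝔸.app (𝔸.app 𝔸.sA f) g) x ≤ 𝔸.app (𝔸.app f x) (𝔸.app g x) := by
  set T := 𝔸.app (𝔸.app f x) (𝔸.app g x) with hT
  apply 𝔸.app_le; apply 𝔸.app_le; apply 𝔸.app_le
  have hf : f ≤ 𝔸.imp x (𝔸.imp (𝔸.app g x) T) :=
    (𝔸.le_imp_app f x).trans (𝔸.imp_mono (𝔸.le_imp_app _ _))
  have hg : g ≤ 𝔸.imp x (𝔸.app g x) := 𝔸.le_imp_app g x
  calc 𝔸.sA ≤ 𝔸.imp (𝔸.imp x (𝔸.imp (𝔸.app g x) T))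
        (𝔸.imp (𝔸.imp x (𝔸.app g x)) (𝔸.imp x T)) :=
      ((iInf_le _ x).trans ((iInf_le _ (𝔸.app g x)).trans (iInf_le _ T)))
    _ ≤ 𝔸.imp f (𝔸.imp (𝔸.imp x (𝔸.app g x)) (𝔸.imp x T)) := 𝔸.imp_anti hf
    _ ≤ 𝔸.imp f (𝔸.imp g (𝔸.imp x T)) := 𝔸.imp_mono (𝔸.imp_anti hg)

end ImplicativeAlgebra

/-- Combinatory terms with constants from `A` and `n` free variables. -/
inductive Tm (A : Type u) : ℕ → Type u
  | var : ∀ {n}, Fin n → Tm A n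
  | cst : ∀ {n}, A → Tm A n
  | ap  : ∀ {n}, Tm A n → Tm A n → Tm A n

namespace Tm

variable {A : Type u} [CompleteLattice A] (𝔸 : ImplicativeAlgebra A)

def ev : ∀ {n}, Tm A n → (Fin n → A) → A
  | _, var i, ρ => ρ i
  | _, cst c, _ => c
  | _, ap t u, ρ => 𝔸.app (ev t ρ) (ev u ρ)

/-- Bracket abstraction. -/
def abs : ∀ {n}, Tm A (n + 1) → Tm A n
  | _, var i =>
      Fin.cases (ap (ap (cst 𝔸.sA) (cst 𝔸.kA)) (cst 𝔸.kA))
        (fun j => ap (cst 𝔸.kA) (var j)) i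
  | _, cst c => ap (cst 𝔸.kA) (cst c)
  | _, ap t u => ap (ap (cst 𝔸.sA) (abs t)) (abs u)

lemma abs_red : ∀ {n} (t : Tm A (n + 1)) (ρ : Fin n → A) (a : A),
    𝔸.app (ev 𝔸 (abs 𝔸 t) ρ) a ≤ ev 𝔸 t (Fin.cons a ρ)
  | _, var i, ρ, a => by
    induction i using Fin.cases with
    | zero =>
      simp only [abs, Fin.cases_zero, ev, Fin.cons_zero]
      exact (𝔸.sA_red _ _ _).trans (𝔸.kA_red a (𝔸.app 𝔸.kA a))
    | succ j =>
      simp only [abs, Fin.cases_succ, ev, Fin.cons_succ]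
      exact 𝔸.kA_red _ _
  | _, cst c, ρ, a => by
    simp only [abs, ev]
    exact 𝔸.kA_red _ _
  | _, ap t u, ρ, a => by
    simp only [abs, ev]
    exact (𝔸.sA_red _ _ _).trans (𝔸.app_mono (abs_red t ρ a) (abs_red u ρ a))

/-- All constants are in the separator. -/
def Good : ∀ {n}, Tm A n → Prop
  | _, var _ => True
  | _, cst c => c ∈ 𝔸.Sep
  | _, ap t u => Good t ∧ Good u

lemma good_abs : ∀ {n} {t : Tm A (n + 1)}, Good 𝔸 t → Good 𝔸 (abs 𝔸 t)
  | _, var i, _ => by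
    induction i using Fin.cases with
    | zero =>
      simp only [abs, Fin.cases_zero, Good]
      exact ⟨⟨𝔸.sA_sep, 𝔸.kA_sep⟩, 𝔸.kA_sep⟩
    | succ j =>
      simp only [abs, Fin.cases_succ, Good]
      exact ⟨𝔸.kA_sep, trivial⟩
  | _, cst c, h => by
    simp only [Good] at h
    simp only [abs, Good]
    exact ⟨𝔸.kA_sep, h⟩
  | _, ap t u, h => by
    simp only [abs, Good] at h ⊢
    exact ⟨⟨𝔸.sA_sep, good_abs h.1⟩, good_abs h.2⟩

lemma ev_sep : ∀ {n} {t : Tm A n} (_ : Good 𝔸 t) {ρ : Fin n → A}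
    (_ : ∀ i, ρ i ∈ 𝔸.Sep), ev 𝔸 t ρ ∈ 𝔸.Sep
  | _, var i, _, ρ, hρ => by simp only [ev]; exact hρ i
  | _, cst c, h, _, _ => by simp only [Good] at h; simp only [ev]; exact h
  | _, ap t u, h, ρ, hρ => by
    simp only [Good] at h
    simp only [ev]
    exact 𝔸.app_mem_sep (ev_sep h.1 hρ) (ev_sep h.2 hρ)

end Tm

namespace ImplicativeAlgebra

variable {A : Type u} [CompleteLattice A] (𝔸 : ImplicativeAlgebra A)

open Tm

/-- The pairing combinator λx y z. z x y. -/
def pA : A :=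
  ev 𝔸 (abs 𝔸 (abs 𝔸 (abs 𝔸
    (ap (ap (var 0) (var (Fin.succ (Fin.succ 0)))) (var (Fin.succ 0)))))) Fin.elim0

lemma pA_sep : 𝔸.pA ∈ 𝔸.Sep := by
  refine ev_sep 𝔸 (good_abs 𝔸 (good_abs 𝔸 (good_abs 𝔸 ?_))) (fun i => i.elim0)
  simp only [Good]
  exact ⟨⟨trivial, trivial⟩, trivial⟩

lemma pA_red (x y z : A) :
    𝔸.app (𝔸.app (𝔸.app 𝔸.pA x) y) z ≤ 𝔸.app (𝔸.app z x) y := by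
  have h1 := abs_red 𝔸 (abs 𝔸 (abs 𝔸
    (ap (ap (var 0) (var (Fin.succ (Fin.succ 0)))) (var (Fin.succ 0))))) Fin.elim0 x
  have h2 := (𝔸.app_mono h1 (le_refl y)).trans
    (abs_red 𝔸 (abs 𝔸 (ap (ap (var 0) (var (Fin.succ (Fin.succ 0)))) (var (Fin.succ 0))))
      (Fin.cons x Fin.elim0) y)
  have h3 := (𝔸.app_mono h2 (le_refl z)).trans
    (abs_red 𝔸 (ap (ap (var 0) (var (Fin.succ (Fin.succ 0)))) (var (Fin.succ 0)))
      (Fin.cons y (Fin.cons x Fin.elim0)) z)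
  simp only [ev, Fin.cons_zero, Fin.cons_succ] at h3
  exact h3

/-- The existential-intro combinator λx z. z x. -/
def eA : A := ev 𝔸 (abs 𝔸 (abs 𝔸 (ap (var 0) (var (Fin.succ 0))))) Fin.elim0

lemma eA_sep : 𝔸.eA ∈ 𝔸.Sep := by
  refine ev_sep 𝔸 (good_abs 𝔸 (good_abs 𝔸 ?_)) (fun i => i.elim0)
  simp only [Good]
  exact ⟨trivial, trivial⟩

lemma eA_red (x z : A) : 𝔸.app (𝔸.app 𝔸.eA x) z ≤ 𝔸.app z x := by
  have h1 := abs_red 𝔸 (abs 𝔸 (ap (var 0) (var (Fin.succ 0)))) Fin.elim0 x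
  have h2 := (𝔸.app_mono h1 (le_refl z)).trans
    (abs_red 𝔸 (ap (var 0) (var (Fin.succ 0))) (Fin.cons x Fin.elim0) z)
  simp only [ev, Fin.cons_zero, Fin.cons_succ] at h2
  exact h2

lemma papp_le_itimes {x y a b : A} (hx : x ≤ a) (hy : y ≤ b) :
    𝔸.app (𝔸.app 𝔸.pA x) y ≤ 𝔸.itimes a b := by
  refine le_iInf fun z => ?_
  set c := 𝔸.imp a (𝔸.imp b z) with hc
  have h1 : 𝔸.app (𝔸.app (𝔸.app 𝔸.pA x) y) c ≤ z := by
    refine (𝔸.pA_red x y c).trans ?_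
    have hcx : c ≤ 𝔸.imp x (𝔸.imp y z) :=
      (𝔸.imp_anti hx).trans (𝔸.imp_mono (𝔸.imp_anti hy))
    exact 𝔸.app_le ((𝔸.le_imp_app _ y).trans
      (𝔸.imp_mono (𝔸.app_le ((𝔸.app_le hcx).trans (le_refl _)))))
  exact (𝔸.le_imp_app _ c).trans (𝔸.imp_mono h1)

lemma eapp_le_iexists {ι : Sort v} {f : ι → A} {x : A} (i : ι) (hx : x ≤ f i) :
    𝔸.app 𝔸.eA x ≤ 𝔸.iexists f := by
  refine le_iInf fun z => ?_
  have h1 : 𝔸.app (𝔸.app 𝔸.eA x) (⨅ j, 𝔸.imp (f j) z) ≤ z :=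
    (𝔸.eA_red x _).trans (𝔸.app_le ((iInf_le _ i).trans (𝔸.imp_anti hx)))
  exact (𝔸.le_imp_app _ _).trans (𝔸.imp_mono h1)

/-- λx f. f (x x f). -/
def wA : A :=
  ev 𝔸 (abs 𝔸 (abs 𝔸 (ap (var 0)
    (ap (ap (var (Fin.succ 0)) (var (Fin.succ 0))) (var 0))))) Fin.elim0

lemma wA_sep : 𝔸.wA ∈ 𝔸.Sep := by
  refine ev_sep 𝔸 (good_abs 𝔸 (good_abs 𝔸 ?_)) (fun i => i.elim0)
  simp only [Good]
  exact ⟨trivial, ⟨⟨trivial, trivial⟩, trivial⟩⟩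

lemma wA_red (f : A) :
    𝔸.app (𝔸.app 𝔸.wA 𝔸.wA) f ≤ 𝔸.app f (𝔸.app (𝔸.app 𝔸.wA 𝔸.wA) f) := by
  have h1 := abs_red 𝔸 (abs 𝔸 (ap (var 0)
    (ap (ap (var (Fin.succ 0)) (var (Fin.succ 0))) (var 0)))) Fin.elim0 𝔸.wA
  have h2 := (𝔸.app_mono h1 (le_refl f)).trans
    (abs_red 𝔸 (ap (var 0) (ap (ap (var (Fin.succ 0)) (var (Fin.succ 0))) (var 0)))
      (Fin.cons 𝔸.wA Fin.elim0) f)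
  simp only [ev, Fin.cons_zero, Fin.cons_succ] at h2
  exact h2

/-- λr x. e (p x r). -/
def eA' : A :=
  ev 𝔸 (abs 𝔸 (abs 𝔸 (ap (cst 𝔸.eA)
    (ap (ap (cst 𝔸.pA) (var 0)) (var (Fin.succ 0)))))) Fin.elim0

lemma eA'_sep : 𝔸.eA' ∈ 𝔸.Sep := by
  refine ev_sep 𝔸 (good_abs 𝔸 (good_abs 𝔸 ?_)) (fun i => i.elim0)
  simp only [Good]
  exact ⟨𝔸.eA_sep, ⟨⟨𝔸.pA_sep, trivial⟩, trivial⟩⟩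

lemma eA'_red (r x : A) :
    𝔸.app (𝔸.app 𝔸.eA' r) x ≤ 𝔸.app 𝔸.eA (𝔸.app (𝔸.app 𝔸.pA x) r) := by
  have h1 := abs_red 𝔸 (abs 𝔸 (ap (cst 𝔸.eA)
    (ap (ap (cst 𝔸.pA) (var 0)) (var (Fin.succ 0))))) Fin.elim0 r
  have h2 := (𝔸.app_mono h1 (le_refl x)).trans
    (abs_red 𝔸 (ap (cst 𝔸.eA) (ap (ap (cst 𝔸.pA) (var 0)) (var (Fin.succ 0))))
      (Fin.cons r Fin.elim0) x)
  simp only [ev, Fin.cons_zero, Fin.cons_succ] at h2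
  exact h2

/-- λr. p (e' r) (e' r). -/
def fA : A :=
  ev 𝔸 (abs 𝔸 (ap (ap (cst 𝔸.pA) (ap (cst 𝔸.eA') (var 0)))
    (ap (cst 𝔸.eA') (var 0)))) Fin.elim0

lemma fA_sep : 𝔸.fA ∈ 𝔸.Sep := by
  refine ev_sep 𝔸 (good_abs 𝔸 ?_) (fun i => i.elim0)
  simp only [Good]
  exact ⟨⟨𝔸.pA_sep, ⟨𝔸.eA'_sep, trivial⟩⟩, ⟨𝔸.eA'_sep, trivial⟩⟩

lemma fA_red (r : A) :
    𝔸.app 𝔸.fA r ≤ 𝔸.app (𝔸.app 𝔸.pA (𝔸.app 𝔸.eA' r)) (𝔸.app 𝔸.eA' r) := by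
  have h1 := abs_red 𝔸 (ap (ap (cst 𝔸.pA) (ap (cst 𝔸.eA') (var 0)))
    (ap (cst 𝔸.eA') (var 0))) Fin.elim0 r
  simp only [ev, Fin.cons_zero] at h1
  exact h1

/-- The reflexivity realizer. -/
def rhoA : A := 𝔸.app (𝔸.app 𝔸.wA 𝔸.wA) 𝔸.fA

lemma rhoA_sep : 𝔸.rhoA ∈ 𝔸.Sep :=
  𝔸.app_mem_sep (𝔸.app_mem_sep 𝔸.wA_sep 𝔸.wA_sep) 𝔸.fA_sep

lemma rhoA_fix :
    𝔸.rhoA ≤ 𝔸.app (𝔸.app 𝔸.pA (𝔸.app 𝔸.eA' 𝔸.rhoA)) (𝔸.app 𝔸.eA' 𝔸.rhoA) := by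
  refine (𝔸.wA_red 𝔸.fA).trans ?_
  exact (𝔸.app_le ((𝔸.le_imp_app 𝔸.fA 𝔸.rhoA).trans
    (𝔸.imp_mono (𝔸.fA_red 𝔸.rhoA))))

end ImplicativeAlgebra

namespace Name

variable {A : Type u} [CompleteLattice A] (𝔸 : ImplicativeAlgebra A)

lemma eqPair_refl (α : Name A) :
    𝔸.app 𝔸.eA' 𝔸.rhoA ≤ (eqPair 𝔸 α α).1 ∧
    𝔸.app 𝔸.eA' 𝔸.rhoA ≤ (eqPair 𝔸 α α).2 := by
  induction α with
  | mk ι e v ih =>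
    set c := 𝔸.app 𝔸.eA' 𝔸.rhoA with hc
    have hrho1 : ∀ i, 𝔸.rhoA ≤
        𝔸.itimes (eqPair 𝔸 (e i) (e i)).2 (eqPair 𝔸 (e i) (e i)).1 := fun i =>
      𝔸.rhoA_fix.trans (𝔸.papp_le_itimes (ih i).2 (ih i).1)
    have hrho2 : ∀ i, 𝔸.rhoA ≤
        𝔸.itimes (eqPair 𝔸 (e i) (e i)).1 (eqPair 𝔸 (e i) (e i)).2 := fun i =>
      𝔸.rhoA_fix.trans (𝔸.papp_le_itimes (ih i).1 (ih i).2)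
    constructor
    · show c ≤ ⨅ i, 𝔸.imp (v i) (𝔸.iexists fun j => 𝔸.itimes (v j)
        (𝔸.itimes (eqPair 𝔸 (e i) (e j)).2 (eqPair 𝔸 (e i) (e j)).1))
      refine le_iInf fun i => ?_
      refine (𝔸.le_imp_app c (v i)).trans (𝔸.imp_mono ?_)
      refine (𝔸.eA'_red 𝔸.rhoA (v i)).trans ?_
      exact 𝔸.eapp_le_iexists i (𝔸.papp_le_itimes (le_refl (v i)) (hrho1 i))
    · show c ≤ ⨅ j, 𝔸.imp (v j) (𝔸.iexists fun i => 𝔸.itimes (v i)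
        (𝔸.itimes (eqPair 𝔸 (e i) (e j)).1 (eqPair 𝔸 (e i) (e j)).2))
      refine le_iInf fun j => ?_
      refine (𝔸.le_imp_app c (v j)).trans (𝔸.imp_mono ?_)
      refine (𝔸.eA'_red 𝔸.rhoA (v j)).trans ?_
      exact 𝔸.eapp_le_iexists j (𝔸.papp_le_itimes (le_refl (v j)) (hrho2 j))

end Name

end Aux

/-- equality in the implicative model is realized-reflexive:
there is ρ ∈ Σ with ρ ≤ ⋀_{α∈W}(α =_W α). -/
theorem eqW_refl_realized {A : Type u} [CompleteLattice A]
    (𝔸 : ImplicativeAlgebra A) :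
    ∃ ρ ∈ 𝔸.Sep, ρ ≤ ⨅ α : Name A, Name.eqW 𝔸 α α := by
  refine ⟨𝔸.rhoA, 𝔸.rhoA_sep, le_iInf fun α => ?_⟩
  exact 𝔸.rhoA_fix.trans
    (𝔸.papp_le_itimes (Name.eqPair_refl 𝔸 α).1 (Name.eqPair_refl 𝔸 α).2)
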